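/- arXiv:1105.2033 — 2 statements merged into one kernel-verified Lean document; each statement's English description precedes it below -/
import Mathlib

section
/- Let l, T > 0, N, j₀ ∈ ℕ with N ≥ 2, h = l/N, τ = T/j₀, grid points x_i = ih, t_j = jτ. Let α : {0,…,N} → (0,1) with α_i = α(x_i), let c₁ > 0 and β₀ > 0, and for each time level j let a_i^{j+1/2} ≥ c₁ (1 ≤ i ≤ N), d_i^{j+1/2} ≥ 0 (0 ≤ i ≤ N), β̃₁^{j+1/2} ≥ β₀, β̃₂^{j+1/2} ≥ β₀, and let φ_i^{j+1/2} (1 ≤ i ≤ N−1), μ̃₁^{j+1/2}, μ̃₂^{j+1/2} be given, with φ_0^{j+1/2} = 2μ̃₁^{j+1/2}/h and φ_N^{j+1/2} = 2μ̃₂^{j+1/2}/h. Suppose σ ≥ 1/(3 − 2^{1−min_i α_i}) and σ ≤ 1, and y_i^j solves Δ_{0t_j}^{α_i} y_i = (Λ(σ y^{j+1} + (1−σ)y^j))_i + φ_i^{j+1/2} for all 0 ≤ i ≤ N, 0 ≤ j ≤ j₀−1, with y_i^0 = u₀(x_i), where Λ is the Robin difference operator below. Then for every 0 ≤ j ≤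 j₀−1, with γ = min{c₁, β₀} and δ = max{1+l, l²}: [ (1/Γ(2−α_i)) , Σ_{j'=0}^{j} (t_{j−j'+1}^{1−α_i} − t_{j−j'}^{1−α_i}) (y^{j'+1})² ] + γ Σ_{j'=0}^{j} ( ‖(y_x̄^{(σ)})^{j'+1}‖₀'² + ((y_0^{(σ)})^{j'+1})² + ((y_N^{(σ)})^{j'+1})² ) τ ≤ (δ/γ) Σ_{j'=0}^{j} ( (μ̃₁^{j'+1/2})² + (μ̃₂^{j'+1/2})² + ‖φ^{j'}‖₀² ) τ + [ t_{j+1}^{1−α_i}/Γ(2−α_i) , u₀²(x_i) ]. -/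
open Finset


/-- The discrete analogue of the Caputo fractional derivative of order `α`
on the uniform grid `t_j = jτ`:
`Δ_{0t_j}^α y = (1/Γ(2-α)) Σ_{s=0}^{j} (t_{j-s+1}^{1-α} − t_{j-s}^{1-α}) (y^{s+1} − y^s)/τ`. -/
noncomputable def dCaputo (α τ : ℝ) (y : ℕ → ℝ) (j : ℕ) : ℝ :=
  (1 / Real.Gamma (2 - α)) *
    ∑ s ∈ Finset.range (j + 1),
      (((((j : ℕ) - s + 1 : ℕ) : ℝ) * τ) ^ (1 - α) -
        ((((j : ℕ) - s : ℕ) : ℝ) * τ) ^ (1 - α)) * (y (s + 1) - y s) / τ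

lemma young (ε x z : ℝ) (hε : 0 < ε) : 2*x*z ≤ ε*x^2 + (1/ε)*z^2 := by
  have h1 : ε*x^2 + (1/ε)*z^2 - 2*x*z = (1/ε)*(ε*x - z)^2 := by field_simp; ring
  nlinarith [mul_nonneg (le_of_lt (one_div_pos.mpr hε)) (sq_nonneg (ε*x - z))]

lemma tele1 (v : ℕ → ℝ) (n : ℕ) : ∑ k ∈ Icc 1 n, (v k - v (k-1)) = v n - v 0 := by
  induction n with
  | zero => simp
  | succ n ih =>
    rw [← Finset.Ico_add_one_right_eq_Icc, Finset.sum_Ico_succ_top (by omega), Finset.Ico_add_one_right_eq_Icc, ih]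
    simp

lemma spatial_abel (v w : ℕ → ℝ) (N : ℕ) (hN : 1 ≤ N) :
    ∑ i ∈ Icc 1 (N-1), v i * (w (i+1) - w i) + v 0 * w 1 - v N * w N =
      -∑ i ∈ Icc 1 N, (v i - v (i-1)) * w i := by
  induction N, hN using Nat.le_induction with
  | base => simp; ring
  | succ N hN ih =>
    have e1 : N + 1 - 1 = N := by omega
    rw [e1]
    have e2 : ∑ i ∈ Icc 1 N, v i * (w (i+1) - w i) =
        ∑ i ∈ Icc 1 (N-1), v i * (w (i+1) - w i) + v N * (w (N+1) - w N) := by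
      have : N = (N-1) + 1 := by omega
      rw [this, ← Finset.Ico_add_one_right_eq_Icc, Finset.sum_Ico_succ_top (by omega), Finset.Ico_add_one_right_eq_Icc]
      have e5 : N - 1 + 1 - 1 = N - 1 := by omega
      rw [e5]
    have e3 : ∑ i ∈ Icc 1 (N+1), (v i - v (i-1)) * w i =
        ∑ i ∈ Icc 1 N, (v i - v (i-1)) * w i + (v (N+1) - v (N+1-1)) * w (N+1) := by
      rw [← Finset.Ico_add_one_right_eq_Icc, Finset.sum_Ico_succ_top (by omega), Finset.Ico_add_one_right_eq_Icc]
    rw [e2, e3]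
    have e4 : N + 1 - 1 = N := by omega
    rw [e4]
    linarith [ih]

lemma embed (v : ℕ → ℝ) (N : ℕ) (hN : 1 ≤ N) (h : ℝ) (hh : 0 < h) :
    ∑ i ∈ Icc 1 (N-1), h * (v i)^2 ≤
      (3*((N:ℝ)*h)/4) * ((v 0)^2 + (v N)^2) +
      (3*((N:ℝ)*h)^2/4) * ∑ i ∈ Icc 1 N, h * ((v i - v (i-1))/h)^2 := by
  set Δ : ℕ → ℝ := fun k => v k - v (k-1) with hΔ
  have hsq : ∀ i ∈ Icc 1 (N-1), (v i)^2 ≤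
      (3/4) * ((v 0)^2 + (v N)^2) + (3/4) * (N:ℝ) * ∑ k ∈ Icc 1 N, (Δ k)^2 := by
    intro i hi
    obtain ⟨hi1, hi2⟩ := Finset.mem_Icc.mp hi
    have hiN : i ≤ N := by omega
    -- 2 v i = v 0 + v N + R  with R = (v i - v 0) - (v N - v i)
    have hsplit : Icc 1 N = Icc 1 i ∪ Icc (i+1) N := by
      ext x
      simp only [Finset.mem_Icc, Finset.mem_union]
      omega
    have hdisj : Disjoint (Icc 1 i) (Icc (i+1) N) := by
      apply Finset.disjoint_left.mpr
      intro x hx1 hx2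
      simp only [Finset.mem_Icc] at hx1 hx2
      omega
    have ht1 : ∑ k ∈ Icc 1 i, Δ k = v i - v 0 := tele1 v i
    have ht2 : ∑ k ∈ Icc (i+1) N, Δ k = v N - v i := by
      have := tele1 v N
      rw [hsplit, Finset.sum_union hdisj, ht1] at this
      linarith
    have hR : 2 * v i = v 0 + v N + ((∑ k ∈ Icc 1 i, Δ k) - ∑ k ∈ Icc (i+1) N, Δ k) := by
      rw [ht1, ht2]; ring
    have hRabs : |(∑ k ∈ Icc 1 i, Δ k) - ∑ k ∈ Icc (i+1) N, Δ k| ≤ ∑ k ∈ Icc 1 N, |Δ k| := by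
      rw [hsplit, Finset.sum_union hdisj]
      calc |(∑ k ∈ Icc 1 i, Δ k) - ∑ k ∈ Icc (i+1) N, Δ k|
          ≤ |∑ k ∈ Icc 1 i, Δ k| + |∑ k ∈ Icc (i+1) N, Δ k| := abs_sub _ _
        _ ≤ (∑ k ∈ Icc 1 i, |Δ k|) + ∑ k ∈ Icc (i+1) N, |Δ k| := by
            gcongr <;> exact Finset.abs_sum_le_sum_abs _ _
    have hCS : (∑ k ∈ Icc 1 N, |Δ k|)^2 ≤ (N:ℝ) * ∑ k ∈ Icc 1 N, (Δ k)^2 := by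
      have := Finset.sum_mul_sq_le_sq_mul_sq (Icc 1 N) (fun _ => (1:ℝ)) (fun k => |Δ k|)
      simp only [one_pow, one_mul, mul_one, Finset.sum_const, nsmul_eq_mul, sq_abs] at this
      have hcard : (Icc 1 N).card = N := by rw [Nat.card_Icc]; omega
      rw [hcard] at this
      exact this
    set R := (∑ k ∈ Icc 1 i, Δ k) - ∑ k ∈ Icc (i+1) N, Δ k with hRdef
    have hR2 : R^2 ≤ (N:ℝ) * ∑ k ∈ Icc 1 N, (Δ k)^2 := by
      calc R^2 = |R|^2 := (sq_abs R).symm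
        _ ≤ (∑ k ∈ Icc 1 N, |Δ k|)^2 := by
            apply pow_le_pow_left₀ (abs_nonneg R) hRabs
        _ ≤ (N:ℝ) * ∑ k ∈ Icc 1 N, (Δ k)^2 := hCS
    have h4 : (2 * v i)^2 = (v 0 + v N + R)^2 := by rw [hR]
    nlinarith [h4, hR2, sq_nonneg (v 0 - v N), sq_nonneg (v 0 - R), sq_nonneg (v N - R)]
  -- sum up
  have hsum : ∑ i ∈ Icc 1 (N-1), h * (v i)^2 ≤
      ∑ i ∈ Icc 1 (N-1), h * ((3/4) * ((v 0)^2 + (v N)^2) + (3/4) * (N:ℝ) * ∑ k ∈ Icc 1 N, (Δ k)^2) := by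
    apply Finset.sum_le_sum
    intro i hi
    exact mul_le_mul_of_nonneg_left (hsq i hi) (le_of_lt hh)
  have hconst : ∑ i ∈ Icc 1 (N-1), h * ((3/4) * ((v 0)^2 + (v N)^2) + (3/4) * (N:ℝ) * ∑ k ∈ Icc 1 N, (Δ k)^2)
      = ((N:ℝ)-1) * h * ((3/4) * ((v 0)^2 + (v N)^2) + (3/4) * (N:ℝ) * ∑ k ∈ Icc 1 N, (Δ k)^2) := by
    rw [Finset.sum_const, Nat.card_Icc, nsmul_eq_mul]
    have : ((N - 1 + 1 - 1 : ℕ):ℝ) = (N:ℝ) - 1 := by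
      have : (N - 1 + 1 - 1 : ℕ) = N - 1 := by omega
      rw [this]
      push_cast [Nat.cast_sub hN]
      ring
    rw [this]
    ring
  have hΔh : ∑ i ∈ Icc 1 N, h * ((v i - v (i-1))/h)^2 = (1/h) * ∑ k ∈ Icc 1 N, (Δ k)^2 := by
    rw [Finset.mul_sum]
    apply Finset.sum_congr rfl
    intro k _
    simp only [hΔ]
    field_simp
  rw [hΔh]
  have hN1 : (1:ℝ) ≤ (N:ℝ) := by exact_mod_cast hN
  have hΔsum : 0 ≤ ∑ k ∈ Icc 1 N, (Δ k)^2 := Finset.sum_nonneg (fun k _ => sq_nonneg _)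
  have hvv : 0 ≤ (v 0)^2 + (v N)^2 := by positivity
  calc ∑ i ∈ Icc 1 (N-1), h * (v i)^2
      ≤ ((N:ℝ)-1) * h * ((3/4) * ((v 0)^2 + (v N)^2) + (3/4) * (N:ℝ) * ∑ k ∈ Icc 1 N, (Δ k)^2) := by
        rw [← hconst]; exact hsum
    _ ≤ (N:ℝ) * h * ((3/4) * ((v 0)^2 + (v N)^2) + (3/4) * (N:ℝ) * ∑ k ∈ Icc 1 N, (Δ k)^2) := by
        apply mul_le_mul_of_nonneg_right _ (by positivity)
        nlinarith [hh]
    _ = (3*((N:ℝ)*h)/4) * ((v 0)^2 + (v N)^2) + (3*((N:ℝ)*h)^2/4) * ((1/h) * ∑ k ∈ Icc 1 N, (Δ k)^2) := by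
        field_simp

lemma rpow_step_anti {p τ : ℝ} (hp0 : 0 < p) (hp1 : p < 1) (hτ : 0 < τ) (k : ℕ) :
    (((k:ℝ)+2)*τ)^p - (((k:ℝ)+1)*τ)^p ≤ (((k:ℝ)+1)*τ)^p - ((k:ℝ)*τ)^p := by
  have hcc := (Real.strictConcaveOn_rpow hp0 hp1).concaveOn
  have h1 : ((k:ℝ)*τ) ∈ Set.Ici (0:ℝ) := Set.mem_Ici.mpr (by positivity)
  have h2 : (((k:ℝ)+2)*τ) ∈ Set.Ici (0:ℝ) := Set.mem_Ici.mpr (by positivity)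
  have key := hcc.2 h1 h2 (by norm_num : (0:ℝ) ≤ 1/2) (by norm_num : (0:ℝ) ≤ 1/2) (by norm_num)
  simp only [smul_eq_mul] at key
  have hm : (1/2:ℝ) * ((k:ℝ)*τ) + (1/2:ℝ) * (((k:ℝ)+2)*τ) = ((k:ℝ)+1)*τ := by ring
  rw [hm] at key
  linarith

lemma sum_by_parts (D e : ℕ → ℝ) (n : ℕ) :
    ∑ s ∈ range (n+1), D s * (e s - e (s+1)) =
      D 0 * e 0 - D n * e (n+1) - ∑ s ∈ range n, (D s - D (s+1)) * e (s+1) := by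
  induction n with
  | zero => simp; ring
  | succ n ih =>
    rw [Finset.sum_range_succ, ih, Finset.sum_range_succ]
    ring

lemma abel_lower (C b : ℕ → ℝ) (j : ℕ) (hC0 : ∀ k, 0 ≤ C k) (hCa : ∀ k, C (k+1) ≤ C k)
    (hb : ∀ s, 0 ≤ b s) :
    (C 0 - C 1) * b j - C 0 * b (j+1) ≤ ∑ s ∈ range (j+1), C (j-s) * (b s - b (s+1)) := by
  have hid := sum_by_parts (fun s => C (j-s)) b j
  rw [hid, Nat.sub_self, Nat.sub_zero]
  rcases Nat.eq_zero_or_pos j with hj | hj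
  · subst hj
    simp only [Finset.range_zero, Finset.sum_empty, sub_zero]
    nlinarith [mul_nonneg (hC0 1) (hb 0)]
  · have hterm : ∀ s ∈ range j, 0 ≤ -((C (j-s) - C (j-(s+1))) * b (s+1)) := by
      intro s hs
      simp only [Finset.mem_range] at hs
      have h1 : j - s = (j - (s+1)) + 1 := by omega
      have h2 : C (j-s) ≤ C (j-(s+1)) := by rw [h1]; exact hCa _
      nlinarith [hb (s+1)]
    have hsingle : -((C (j-(j-1)) - C (j-(j-1+1))) * b (j-1+1)) ≤
        ∑ s ∈ range j, -((C (j-s) - C (j-(s+1))) * b (s+1)) :=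
      Finset.single_le_sum hterm (Finset.mem_range.mpr (by omega))
    have e1 : j - (j-1) = 1 := by omega
    have e2 : j - (j-1+1) = 0 := by omega
    have e3 : j - 1 + 1 = j := by omega
    rw [e1, e2, e3] at hsingle
    have : ∑ s ∈ range j, (C (j-s) - C (j-(s+1))) * b (s+1) =
        - ∑ s ∈ range j, -((C (j-s) - C (j-(s+1))) * b (s+1)) := by
      rw [← Finset.sum_neg_distrib]; simp
    rw [this]
    nlinarith [mul_nonneg (hC0 j) (hb 0)]

lemma sigma_ineq (σ x : ℝ) (hx0 : 0 < x) (hx1 : x < 1) (hσx : 1 ≤ σ * (1+x))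
    (hσ2 : σ ≤ 1) : (1-σ)^2 ≤ σ^2 * x := by
  have hσpos : 0 < σ := by nlinarith
  set s := Real.sqrt x with hs
  have hs2 : s^2 = x := Real.sq_sqrt (le_of_lt hx0)
  have hs0 : 0 ≤ s := Real.sqrt_nonneg x
  have hs1 : s ≤ 1 := by
    have h1 := Real.sqrt_le_sqrt (le_of_lt hx1)
    simpa [hs] using h1
  have hxs : x ≤ s := by nlinarith
  have hkey : 1 - σ ≤ σ * s := by nlinarith
  nlinarith [sq_nonneg (σ*s - (1-σ))]

lemma key_ineq (α σ τ : ℝ) (hα1 : 0 < α) (hα2 : α < 1) (hτ : 0 < τ)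
    (hσ1 : 1/(3 - (2:ℝ)^(1-α)) ≤ σ) (hσ2 : σ ≤ 1) (y : ℕ → ℝ) (j : ℕ) :
    dCaputo α τ (fun s => (y s)^2) j ≤
      2 * (σ * y (j+1) + (1-σ) * y j) * dCaputo α τ y j := by
  set p := 1 - α with hp
  have hp0 : 0 < p := by simp [hp]; linarith
  have hp1 : p < 1 := by simp [hp]; linarith
  have hΓ : 0 < Real.Gamma (2 - α) := Real.Gamma_pos_of_pos (by linarith)
  set v := σ * y (j+1) + (1-σ) * y j with hv
  set C : ℕ → ℝ := fun k => (((k+1:ℕ):ℝ)*τ)^p - (((k:ℕ):ℝ)*τ)^p with hC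
  have hC0 : ∀ k, 0 ≤ C k := by
    intro k
    have : (((k:ℕ):ℝ)*τ)^p ≤ (((k+1:ℕ):ℝ)*τ)^p := by
      apply Real.rpow_le_rpow (by positivity) _ (le_of_lt hp0)
      have : ((k:ℝ)) ≤ ((k:ℝ)+1) := by linarith
      push_cast
      nlinarith
    simp only [hC]
    push_cast at this ⊢
    linarith [this]
  have hCa : ∀ k, C (k+1) ≤ C k := by
    intro k
    have := rpow_step_anti hp0 hp1 hτ k
    simp only [hC]
    push_cast
    convert this using 3 <;> push_cast <;> ring
  set b : ℕ → ℝ := fun s => (v - y s)^2 with hb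
  have hbn : ∀ s, 0 ≤ b s := fun s => sq_nonneg _
  -- final-terms inequality
  have hfin : C 0 * b (j+1) ≤ (C 0 - C 1) * b j := by
    have hC0v : C 0 = τ^p := by
      simp [hC, Real.zero_rpow (ne_of_gt hp0)]
    have hC1v : C 1 = (2:ℝ)^p * τ^p - τ^p := by
      simp only [hC]
      push_cast
      rw [Real.mul_rpow (by norm_num) (le_of_lt hτ)]
      norm_num
    have hbj : b j = σ^2 * (y (j+1) - y j)^2 := by simp [hb, hv]; ring
    have hbj1 : b (j+1) = (1-σ)^2 * (y (j+1) - y j)^2 := by simp [hb, hv]; ring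
    have hq1 : (1:ℝ) < (2:ℝ)^p := by
      rw [show (1:ℝ) = (2:ℝ)^(0:ℝ) by simp]
      exact Real.rpow_lt_rpow_of_exponent_lt (by norm_num) hp0
    have hq2 : (2:ℝ)^p < 2 := by
      nth_rewrite 2 [show (2:ℝ) = (2:ℝ)^(1:ℝ) by simp]
      exact Real.rpow_lt_rpow_of_exponent_lt (by norm_num) hp1
    set x : ℝ := 2 - (2:ℝ)^p with hx
    have hx0 : 0 < x := by simp [hx]; linarith
    have hx1 : x < 1 := by simp [hx]; linarith
    have hσpos : 0 < σ := by
      have : 0 < 1/(3 - (2:ℝ)^p) := by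
        apply one_div_pos.mpr; linarith
      linarith [hσ1]
    have hσx : 1 ≤ σ * (1 + x) := by
      have h3 : (3:ℝ) - (2:ℝ)^p = 1 + x := by simp [hx]; ring
      rw [h3] at hσ1
      have h1x : 0 < 1 + x := by linarith
      calc (1:ℝ) = (1/(1+x)) * (1+x) := by field_simp
        _ ≤ σ * (1+x) := by apply mul_le_mul_of_nonneg_right hσ1 (le_of_lt h1x)
    have hmain : (1-σ)^2 ≤ σ^2 * x := sigma_ineq σ x hx0 hx1 hσx hσ2
    have hτp : (0:ℝ) ≤ τ^p := le_of_lt (Real.rpow_pos_of_pos hτ p)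
    rw [hC0v, hC1v, hbj, hbj1]
    have hΔ : (0:ℝ) ≤ (y (j+1) - y j)^2 := sq_nonneg _
    have step1 : (1-σ)^2 * (y (j+1) - y j)^2 ≤ (σ^2 * x) * (y (j+1) - y j)^2 :=
      mul_le_mul_of_nonneg_right hmain hΔ
    have step2 : τ^p * ((1-σ)^2 * (y (j+1) - y j)^2) ≤ τ^p * ((σ^2 * x) * (y (j+1) - y j)^2) :=
      mul_le_mul_of_nonneg_left step1 hτp
    calc τ^p * ((1-σ)^2 * (y (j+1) - y j)^2)
        ≤ τ^p * ((σ^2 * x) * (y (j+1) - y j)^2) := step2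
      _ = (τ^p - ((2:ℝ)^p * τ^p - τ^p)) * (σ^2 * (y (j+1) - y j)^2) := by
          simp only [hx]; ring
  -- reduce to sum
  have hsum : 0 ≤ ∑ s ∈ range (j+1), C (j-s) * (b s - b (s+1)) := by
    have h1 := abel_lower C b j hC0 hCa hbn
    linarith
  have alg : ∀ (A w y1 y2 : ℝ), 2*w*(A*(y2 - y1)/τ) - A*(y2^2 - y1^2)/τ
      = A*((w-y1)^2 - (w-y2)^2)/τ := by
    intro A w y1 y2
    field_simp
    ring
  unfold dCaputo
  rw [← sub_nonneg]
  have hswap : ∀ (A B : ℝ), 2*v*((1 / Real.Gamma (2-α))*A) - (1 / Real.Gamma (2-α))*B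
      = (1 / Real.Gamma (2-α))*(2*v*A - B) := fun A B => by ring
  rw [hswap, Finset.mul_sum, ← Finset.sum_sub_distrib]
  have hcongr : ∀ s ∈ Finset.range (j+1),
      2 * v * ((((((j:ℕ) - s + 1 : ℕ):ℝ) * τ)^(1-α) - ((((j:ℕ) - s : ℕ):ℝ) * τ)^(1-α)) * (y (s+1) - y s) / τ)
      - (((((j:ℕ) - s + 1 : ℕ):ℝ) * τ)^(1-α) - ((((j:ℕ) - s : ℕ):ℝ) * τ)^(1-α)) * ((fun s => (y s)^2) (s+1) - (fun s => (y s)^2) s) / τ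
      = C (j-s) * (b s - b (s+1)) / τ := by
    intro s hs
    simp only [hC, hb, ← hp]
    exact alg _ v (y s) (y (s+1))
  rw [Finset.sum_congr rfl hcongr, ← Finset.sum_div]
  positivity

lemma sum_swap_tri (f : ℕ → ℕ → ℝ) (m : ℕ) :
    ∑ j' ∈ range m, ∑ s ∈ range (j'+1), f j' s = ∑ s ∈ range m, ∑ j' ∈ Ico s m, f j' s := by
  induction m with
  | zero => simp
  | succ m ih =>
    rw [Finset.sum_range_succ, ih, Finset.sum_range_succ]
    have h1 : ∀ s ∈ range m, ∑ j' ∈ Ico s (m+1), f j' s = (∑ j' ∈ Ico s m, f j' s) + f m s := by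
      intro s hs
      exact Finset.sum_Ico_succ_top (le_of_lt (Finset.mem_range.mp hs)) _
    have h3 : ∑ s ∈ range (m+1), ∑ j' ∈ Ico s (m+1), f j' s =
        ∑ s ∈ range m, (∑ j' ∈ Ico s m, f j' s + f m s) + f m m := by
      rw [Finset.sum_range_succ, Finset.sum_congr rfl h1]
      simp
    rw [h3, Finset.sum_add_distrib]
    ring

lemma time_sum (α τ : ℝ) (hα1 : 0 < α) (hα2 : α < 1) (hτ : 0 < τ) (g : ℕ → ℝ) (j : ℕ) :
    ∑ j' ∈ range (j+1), τ * dCaputo α τ g j' =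
      (1/Real.Gamma (2-α)) * (∑ j' ∈ range (j+1),
        (((((j:ℕ) - j' + 1 : ℕ):ℝ)*τ)^(1-α) - ((((j:ℕ) - j' : ℕ):ℝ)*τ)^(1-α)) * g (j'+1))
      - ((((j+1:ℕ):ℝ)*τ)^(1-α))/Real.Gamma (2-α) * g 0 := by
  have hp0 : 0 < 1 - α := by linarith
  set p := 1 - α with hp
  set F : ℕ → ℝ := fun m => (((m:ℕ):ℝ)*τ)^p with hF
  have hF0 : F 0 = 0 := by
    simp [hF, Real.zero_rpow (ne_of_gt hp0)]
  have step1 : ∀ j', τ * dCaputo α τ g j' =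
      (1/Real.Gamma (2-α)) * ∑ s ∈ range (j'+1), (F (j'-s+1) - F (j'-s)) * (g (s+1) - g s) := by
    intro j'
    unfold dCaputo
    rw [mul_left_comm, Finset.mul_sum, ← hp]
    congr 1
    apply Finset.sum_congr rfl
    intro s hs
    rw [mul_comm τ _, div_mul_cancel₀ _ (ne_of_gt hτ)]
  rw [Finset.sum_congr rfl (fun j' _ => step1 j'), ← Finset.mul_sum,
    sum_swap_tri (fun j' s => (F (j'-s+1) - F (j'-s)) * (g (s+1) - g s)) (j+1)]
  have step3 : ∀ s ∈ range (j+1),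
      ∑ j' ∈ Ico s (j+1), (F (j'-s+1) - F (j'-s)) * (g (s+1) - g s) =
        F (j+1-s) * (g (s+1) - g s) := by
    intro s hs
    rw [← Finset.sum_mul]
    congr 1
    rw [Finset.sum_Ico_eq_sum_range]
    have hre : ∀ k ∈ range (j+1-s), F (s+k-s+1) - F (s+k-s) = F (k+1) - F k := by
      intro k _
      have e : s+k-s = k := by omega
      rw [e]
    rw [Finset.sum_congr rfl hre, Finset.sum_range_sub F (j+1-s), hF0, sub_zero]
  rw [Finset.sum_congr rfl step3]
  have step4 : ∀ s ∈ range (j+1),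
      F (j+1-s) * (g (s+1) - g s) =
        (F (j-s+1) - F (j-s)) * g (s+1) +
          (F (j+1-(s+1)) * g (s+1) - F (j+1-s) * g s) := by
    intro s hs
    have hsle : s ≤ j := Nat.lt_succ_iff.mp (Finset.mem_range.mp hs)
    have e1 : j+1-s = j-s+1 := by omega
    have e2 : j+1-(s+1) = j-s := by omega
    rw [e1, e2]
    ring
  rw [Finset.sum_congr rfl step4, Finset.sum_add_distrib,
    Finset.sum_range_sub (fun s => F (j+1-s) * g s) (j+1)]
  simp only [Nat.sub_self, hF0, zero_mul, Nat.sub_zero]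
  have : ∀ s ∈ range (j+1),
      (F (j-s+1) - F (j-s)) * g (s+1) =
        (((((j:ℕ) - s + 1 : ℕ):ℝ)*τ)^p - ((((j:ℕ) - s : ℕ):ℝ)*τ)^p) * g (s+1) := by
    intro s _; rfl
  rw [Finset.sum_congr rfl this]
  ring

lemma absorb1 (γ δ l : ℝ) (hγ0 : 0 < γ) (hδ0 : 0 < δ) (hδ2 : l^2 ≤ δ) (hl : 0 ≤ l) :
    γ/δ*(3*l^2/4) ≤ γ := by
  rw [div_mul_eq_mul_div, div_le_iff₀ hδ0]
  nlinarith [mul_le_mul_of_nonneg_left hδ2 hγ0.le, sq_nonneg l]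

lemma absorb2 (γ δ l : ℝ) (hγ0 : 0 < γ) (hδ0 : 0 < δ) (hδ1 : 1 + l ≤ δ) (hl : 0 ≤ l) :
    γ/δ*(1 + 3*l/4) ≤ γ := by
  rw [div_mul_eq_mul_div, div_le_iff₀ hδ0]
  nlinarith [mul_le_mul_of_nonneg_left hδ1 hγ0.le]

lemma combine (P γ δ ε l A B0 BN SA DD PH V2 F2 M1 M2 Y1 Y2 BB1 BB2 : ℝ)
    (hA0 : 0 ≤ A) (hB0 : 0 ≤ B0) (hBN : 0 ≤ BN) (hDD : 0 ≤ DD)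
    (hP : P ≤ -2*SA - 2*DD - 2*BB1 - 2*BB2 + 2*PH + Y1 + Y2)
    (hSA : γ*A ≤ SA)
    (hBB1 : γ*B0 ≤ BB1) (hBB2 : γ*BN ≤ BB2)
    (hY1 : Y1 ≤ ε*B0 + δ/γ*M1) (hY2 : Y2 ≤ ε*BN + δ/γ*M2)
    (hPH : 2*PH ≤ ε*V2 + δ/γ*F2)
    (hV2 : ε*V2 ≤ ε*(3*l/4)*B0 + ε*(3*l/4)*BN + ε*(3*l^2/4)*A)
    (habs1 : ε*(3*l^2/4)*A ≤ γ*A)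
    (habs2 : ε*(3*l/4)*B0 + ε*B0 ≤ γ*B0)
    (habs3 : ε*(3*l/4)*BN + ε*BN ≤ γ*BN) :
    P + γ*(A + B0 + BN) ≤ δ/γ*(M1 + M2 + F2) := by
  have e1 : γ*(A + B0 + BN) = γ*A + γ*B0 + γ*BN := by ring
  have e2 : δ/γ*(M1 + M2 + F2) = δ/γ*M1 + δ/γ*M2 + δ/γ*F2 := by ring
  linarith

set_option maxHeartbeats 1000000 in
lemma perlevel (l c₁ β₀ σ h τ : ℝ) (N : ℕ) (hN : 2 ≤ N)
    (hl : 0 < l) (hc₁ : 0 < c₁) (hβ₀ : 0 < β₀)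
    (hh0 : 0 < h) (hτ0 : 0 < τ) (hlNh : (N:ℝ)*h = l)
    (α : ℕ → ℝ) (hα : ∀ i ≤ N, 0 < α i ∧ α i < 1)
    (hσi : ∀ i ≤ N, 1/(3 - (2:ℝ)^((1:ℝ) - α i)) ≤ σ) (hσ2 : σ ≤ 1)
    (a d φ : ℕ → ℝ) (βt₁ βt₂ μt₁ μt₂ : ℝ)
    (ha : ∀ i, 1 ≤ i → i ≤ N → c₁ ≤ a i) (hd : ∀ i ≤ N, 0 ≤ d i)
    (hβ₁ : β₀ ≤ βt₁) (hβ₂ : β₀ ≤ βt₂)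
    (hφ0 : φ 0 = 2 * μt₁ / h) (hφN : φ N = 2 * μt₂ / h)
    (y : ℕ → ℕ → ℝ) (t : ℕ)
    (hs0 : dCaputo (α 0) τ (fun s => y 0 s) t =
        (a 1 * ((σ * y 1 (t + 1) + (1 - σ) * y 1 t) -
            (σ * y 0 (t + 1) + (1 - σ) * y 0 t)) / h -
          βt₁ * (σ * y 0 (t + 1) + (1 - σ) * y 0 t)) / (0.5 * h) + φ 0)
    (hsi : ∀ i, 1 ≤ i → i ≤ N - 1 →
      dCaputo (α i) τ (fun s => y i s) t =
        ((a (i + 1) * ((σ * y (i + 1) (t + 1) + (1 - σ) * y (i + 1) t) -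
            (σ * y i (t + 1) + (1 - σ) * y i t)) / h -
          a i * ((σ * y i (t + 1) + (1 - σ) * y i t) -
            (σ * y (i - 1) (t + 1) + (1 - σ) * y (i - 1) t)) / h) / h -
          d i * (σ * y i (t + 1) + (1 - σ) * y i t)) + φ i)
    (hsN : dCaputo (α N) τ (fun s => y N s) t =
        (-(a N) * ((σ * y N (t + 1) + (1 - σ) * y N t) -
            (σ * y (N - 1) (t + 1) + (1 - σ) * y (N - 1) t)) / h -
          βt₂ * (σ * y N (t + 1) + (1 - σ) * y N t)) / (0.5 * h) + φ N) :
    (∑ i ∈ Icc 1 (N-1), h * dCaputo (α i) τ (fun s => (y i s)^2) t)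
      + 0.5 * h * dCaputo (α 0) τ (fun s => (y 0 s)^2) t
      + 0.5 * h * dCaputo (α N) τ (fun s => (y N s)^2) t
      + min c₁ β₀ * ((∑ i ∈ Icc 1 N, h *
          (((σ * y i (t + 1) + (1 - σ) * y i t) -
            (σ * y (i - 1) (t + 1) + (1 - σ) * y (i - 1) t)) / h) ^ 2) +
          (σ * y 0 (t + 1) + (1 - σ) * y 0 t) ^ 2 +
          (σ * y N (t + 1) + (1 - σ) * y N t) ^ 2) ≤
      max (1 + l) (l ^ 2) / min c₁ β₀ *
        ((μt₁) ^ 2 + (μt₂) ^ 2 + ∑ i ∈ Icc 1 (N-1), h * (φ i) ^ 2) := by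
  set γ := min c₁ β₀ with hγdef
  set δ := max (1 + l) (l ^ 2) with hδdef
  have hγ0 : 0 < γ := lt_min hc₁ hβ₀
  have hδl : 1 + l ≤ δ := le_max_left _ _
  have hδl2 : l ^ 2 ≤ δ := le_max_right _ _
  have hδ0 : 0 < δ := lt_of_lt_of_le (by linarith) hδl
  set v : ℕ → ℝ := fun i => σ * y i (t + 1) + (1 - σ) * y i t with hv
  set w : ℕ → ℝ := fun i => a i * (v i - v (i - 1)) / h with hw
  -- quantities
  set A := ∑ i ∈ Icc 1 N, h * ((v i - v (i - 1)) / h) ^ 2 with hA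
  have hA0 : 0 ≤ A := Finset.sum_nonneg (fun i _ => by positivity)
  have hB00 : 0 ≤ (v 0)^2 := sq_nonneg _
  have hBN0 : 0 ≤ (v N)^2 := sq_nonneg _
  -- step 1 : key inequality at each node
  have hkey : ∀ i ≤ N, dCaputo (α i) τ (fun s => (y i s)^2) t ≤
      2 * v i * dCaputo (α i) τ (fun s => y i s) t := by
    intro i hi
    exact key_ineq (α i) σ τ (hα i hi).1 (hα i hi).2 hτ0 (hσi i hi) hσ2 (fun s => y i s) t
  -- step 2 : P ≤ Q
  have hPQ : (∑ i ∈ Icc 1 (N-1), h * dCaputo (α i) τ (fun s => (y i s)^2) t)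
      + 0.5 * h * dCaputo (α 0) τ (fun s => (y 0 s)^2) t
      + 0.5 * h * dCaputo (α N) τ (fun s => (y N s)^2) t ≤
      (∑ i ∈ Icc 1 (N-1), h * (2 * v i * dCaputo (α i) τ (fun s => y i s) t))
      + 0.5 * h * (2 * v 0 * dCaputo (α 0) τ (fun s => y 0 s) t)
      + 0.5 * h * (2 * v N * dCaputo (α N) τ (fun s => y N s) t) := by
    have h1 : ∑ i ∈ Icc 1 (N-1), h * dCaputo (α i) τ (fun s => (y i s)^2) t ≤
        ∑ i ∈ Icc 1 (N-1), h * (2 * v i * dCaputo (α i) τ (fun s => y i s) t) := by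
      apply Finset.sum_le_sum
      intro i hi
      obtain ⟨hi1, hi2⟩ := Finset.mem_Icc.mp hi
      exact mul_le_mul_of_nonneg_left (hkey i (by omega)) (le_of_lt hh0)
    have h2 : 0.5 * h * dCaputo (α 0) τ (fun s => (y 0 s)^2) t ≤
        0.5 * h * (2 * v 0 * dCaputo (α 0) τ (fun s => y 0 s) t) :=
      mul_le_mul_of_nonneg_left (hkey 0 (by omega)) (by linarith)
    have h3 : 0.5 * h * dCaputo (α N) τ (fun s => (y N s)^2) t ≤
        0.5 * h * (2 * v N * dCaputo (α N) τ (fun s => y N s) t) :=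
      mul_le_mul_of_nonneg_left (hkey N (le_refl N)) (by linarith)
    linarith
  -- step 3 : substitute the scheme and rearrange, interior part
  have hint : ∑ i ∈ Icc 1 (N-1), h * (2 * v i * dCaputo (α i) τ (fun s => y i s) t) =
      ∑ i ∈ Icc 1 (N-1), (2 * (v i * (w (i+1) - w i)) - 2 * (h * d i * (v i)^2)
        + 2 * (h * φ i * v i)) := by
    apply Finset.sum_congr rfl
    intro i hi
    obtain ⟨hi1, hi2⟩ := Finset.mem_Icc.mp hi
    rw [hsi i hi1 hi2]
    simp only [hw, hv, Nat.add_sub_cancel]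
    field_simp
  -- boundary terms
  have hb0 : 0.5 * h * (2 * v 0 * dCaputo (α 0) τ (fun s => y 0 s) t) =
      2 * (v 0 * w 1) - 2 * (βt₁ * (v 0)^2) + 2 * (μt₁ * v 0) := by
    rw [hs0, hφ0]
    simp only [hw, hv, Nat.sub_self]
    have h05 : (0.5:ℝ) * h ≠ 0 := by norm_num; linarith
    field_simp
    ring
  have hbN : 0.5 * h * (2 * v N * dCaputo (α N) τ (fun s => y N s) t) =
      -(2 * (v N * w N)) - 2 * (βt₂ * (v N)^2) + 2 * (μt₂ * v N) := by
    rw [hsN, hφN]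
    simp only [hw, hv]
    have h05 : (0.5:ℝ) * h ≠ 0 := by norm_num; linarith
    field_simp
    ring
  -- Abel in space
  have habel := spatial_abel v w N (by omega)
  have hWA : ∑ i ∈ Icc 1 N, (v i - v (i - 1)) * w i =
      ∑ i ∈ Icc 1 N, h * a i * ((v i - v (i - 1)) / h) ^ 2 := by
    apply Finset.sum_congr rfl
    intro i _
    simp only [hw]
    field_simp
  -- full expression for Q
  have hQ : (∑ i ∈ Icc 1 (N-1), h * (2 * v i * dCaputo (α i) τ (fun s => y i s) t))
      + 0.5 * h * (2 * v 0 * dCaputo (α 0) τ (fun s => y 0 s) t)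
      + 0.5 * h * (2 * v N * dCaputo (α N) τ (fun s => y N s) t) =
      -2 * (∑ i ∈ Icc 1 N, h * a i * ((v i - v (i - 1)) / h) ^ 2)
      - 2 * (∑ i ∈ Icc 1 (N-1), h * d i * (v i)^2)
      - 2 * (βt₁ * (v 0)^2) - 2 * (βt₂ * (v N)^2)
      + 2 * (∑ i ∈ Icc 1 (N-1), h * φ i * v i)
      + 2 * (μt₁ * v 0) + 2 * (μt₂ * v N) := by
    rw [hint, hb0, hbN]
    have hsplit : ∑ i ∈ Icc 1 (N-1), (2 * (v i * (w (i+1) - w i)) - 2 * (h * d i * (v i)^2)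
        + 2 * (h * φ i * v i)) =
        2 * (∑ i ∈ Icc 1 (N-1), v i * (w (i+1) - w i))
        - 2 * (∑ i ∈ Icc 1 (N-1), h * d i * (v i)^2)
        + 2 * (∑ i ∈ Icc 1 (N-1), h * φ i * v i) := by
      rw [Finset.sum_add_distrib, Finset.sum_sub_distrib, Finset.mul_sum, Finset.mul_sum,
        Finset.mul_sum]
    rw [hsplit]
    rw [← hWA]
    linarith [habel]
  -- step 4 : lower bounds for the negative terms
  have hSa : γ * A ≤ ∑ i ∈ Icc 1 N, h * a i * ((v i - v (i - 1)) / h) ^ 2 := by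
    rw [hA, Finset.mul_sum]
    apply Finset.sum_le_sum
    intro i hi
    obtain ⟨hi1, hi2⟩ := Finset.mem_Icc.mp hi
    have hai : γ ≤ a i := le_trans (min_le_left _ _) (ha i hi1 hi2)
    have : γ * (h * ((v i - v (i - 1)) / h) ^ 2) ≤ a i * (h * ((v i - v (i - 1)) / h) ^ 2) :=
      mul_le_mul_of_nonneg_right hai (by positivity)
    linarith [this]
  have hDd : 0 ≤ ∑ i ∈ Icc 1 (N-1), h * d i * (v i)^2 := by
    apply Finset.sum_nonneg
    intro i hi
    obtain ⟨hi1, hi2⟩ := Finset.mem_Icc.mp hi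
    have := hd i (by omega)
    positivity
  have hγβ1 : γ * (v 0)^2 ≤ βt₁ * (v 0)^2 :=
    mul_le_mul_of_nonneg_right (le_trans (min_le_right _ _) hβ₁) hB00
  have hγβ2 : γ * (v N)^2 ≤ βt₂ * (v N)^2 :=
    mul_le_mul_of_nonneg_right (le_trans (min_le_right _ _) hβ₂) hBN0
  -- step 5 : Young for data terms, ε = γ/δ
  set ε := γ / δ with hεdef
  have hε0 : 0 < ε := div_pos hγ0 hδ0
  have hεinv : 1 / ε = δ / γ := by rw [hεdef, one_div_div]
  have hY1 : 2 * (μt₁ * v 0) ≤ ε * (v 0)^2 + (δ/γ) * μt₁^2 := by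
    have := young ε (v 0) μt₁ hε0
    rw [hεinv] at this
    linarith
  have hY2 : 2 * (μt₂ * v N) ≤ ε * (v N)^2 + (δ/γ) * μt₂^2 := by
    have := young ε (v N) μt₂ hε0
    rw [hεinv] at this
    linarith
  have hYΦ : 2 * (∑ i ∈ Icc 1 (N-1), h * φ i * v i) ≤
      ε * (∑ i ∈ Icc 1 (N-1), h * (v i)^2) + (δ/γ) * (∑ i ∈ Icc 1 (N-1), h * (φ i)^2) := by
    rw [Finset.mul_sum, Finset.mul_sum, Finset.mul_sum, ← Finset.sum_add_distrib]
    apply Finset.sum_le_sum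
    intro i _
    have hy := young ε (v i) (φ i) hε0
    rw [hεinv] at hy
    have := mul_le_mul_of_nonneg_left hy (le_of_lt hh0)
    calc 2 * (h * φ i * v i) = h * (2 * v i * φ i) := by ring
      _ ≤ h * (ε * v i ^ 2 + δ / γ * φ i ^ 2) := mul_le_mul_of_nonneg_left hy (le_of_lt hh0)
      _ = ε * (h * v i ^ 2) + δ / γ * (h * φ i ^ 2) := by ring
  -- step 6 : embedding
  have hemb : ∑ i ∈ Icc 1 (N-1), h * (v i)^2 ≤
      (3 * l / 4) * ((v 0)^2 + (v N)^2) + (3 * l^2 / 4) * A := by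
    have he := embed v N (by omega) h hh0
    rw [hlNh] at he
    rw [hA]
    exact he
  have hembε : ε * (∑ i ∈ Icc 1 (N-1), h * (v i)^2) ≤
      ε * ((3 * l / 4) * ((v 0)^2 + (v N)^2) + (3 * l^2 / 4) * A) :=
    mul_le_mul_of_nonneg_left hemb (le_of_lt hε0)
  -- absorption inequalities
  have hc1 : ε * (3 * l^2 / 4) ≤ γ := by
    rw [hεdef]; exact absorb1 γ δ l hγ0 hδ0 hδl2 (le_of_lt hl)
  have hc2 : ε * (1 + 3 * l / 4) ≤ γ := by
    rw [hεdef]; exact absorb2 γ δ l hγ0 hδ0 hδl (le_of_lt hl)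
  have habs1 : ε * (3 * l^2 / 4) * A ≤ γ * A := mul_le_mul_of_nonneg_right hc1 hA0
  have habs2 : ε * (3 * l / 4) * (v 0)^2 + ε * (v 0)^2 ≤ γ * (v 0)^2 :=
    calc ε * (3 * l / 4) * (v 0)^2 + ε * (v 0)^2 = ε * (1 + 3 * l / 4) * (v 0)^2 := by ring
      _ ≤ γ * (v 0)^2 := mul_le_mul_of_nonneg_right hc2 hB00
  have habs3 : ε * (3 * l / 4) * (v N)^2 + ε * (v N)^2 ≤ γ * (v N)^2 :=
    calc ε * (3 * l / 4) * (v N)^2 + ε * (v N)^2 = ε * (1 + 3 * l / 4) * (v N)^2 := by ring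
      _ ≤ γ * (v N)^2 := mul_le_mul_of_nonneg_right hc2 hBN0
  have hembε' : ε * ((3 * l / 4) * ((v 0)^2 + (v N)^2) + (3 * l^2 / 4) * A) =
      ε * (3 * l / 4) * (v 0)^2 + ε * (3 * l / 4) * (v N)^2 + ε * (3 * l^2 / 4) * A := by
    ring
  -- step 7 : final combination
  rw [hQ] at hPQ
  rw [hembε'] at hembε
  exact combine _ γ δ ε l _ _ _ _ _ _ _ _ _ _ _ _ _ _
    hA0 hB00 hBN0 hDd hPQ hSa hγβ1 hγβ2 hY1 hY2 hYΦ hembε habs1 habs2 habs3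

/-- Theorem 4: a priori estimate (39) for the weighted difference scheme
(37)–(38) for the Robin boundary value problem, valid for
`σ ≥ 1/(3 − 2^{1−min_i α_i})`.  Here `y i j ≈ u(x_i, t_j)`, `h = l/N`,
`τ = T/j₀`; `β̃₁ j, β̃₂ j, μ̃₁ j, μ̃₂ j` are the Robin data at the time level
`t_{j+1/2}`, `γ = min{c₁, β₀}` and `δ = max{1+l, l²}`. -/
theorem robin_scheme_apriori_estimate
    (l T c₁ β₀ σ : ℝ) (N j₀ : ℕ) (hN : 2 ≤ N) (hj₀ : 0 < j₀)
    (hl : 0 < l) (hT : 0 < T) (hc₁ : 0 < c₁) (hβ₀ : 0 < β₀)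
    (h τ : ℝ) (hh : h = l / N) (hτ : τ = T / j₀)
    (α : ℕ → ℝ) (hα : ∀ i ≤ N, 0 < α i ∧ α i < 1)
    (a d φ : ℕ → ℕ → ℝ) (βt₁ βt₂ μt₁ μt₂ : ℕ → ℝ)
    (ha : ∀ j < j₀, ∀ i, 1 ≤ i → i ≤ N → c₁ ≤ a i j)
    (hd : ∀ j < j₀, ∀ i ≤ N, 0 ≤ d i j)
    (hβ₁ : ∀ j < j₀, β₀ ≤ βt₁ j) (hβ₂ : ∀ j < j₀, β₀ ≤ βt₂ j)
    (hφ0 : ∀ j < j₀, φ 0 j = 2 * μt₁ j / h)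
    (hφN : ∀ j < j₀, φ N j = 2 * μt₂ j / h)
    (hσ1 : 1 / (3 - (2:ℝ) ^ ((1:ℝ) -
      (Finset.range (N + 1)).inf' (Finset.nonempty_range_iff.mpr (Nat.succ_ne_zero N)) α)) ≤ σ)
    (hσ2 : σ ≤ 1)
    (y : ℕ → ℕ → ℝ) (u₀ : ℝ → ℝ)
    -- the difference scheme (37) at the left boundary node `i = 0`:
    (hscheme0 : ∀ j < j₀,
      dCaputo (α 0) τ (fun s => y 0 s) j =
        (a 1 j * ((σ * y 1 (j + 1) + (1 - σ) * y 1 j) -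
            (σ * y 0 (j + 1) + (1 - σ) * y 0 j)) / h -
          βt₁ j * (σ * y 0 (j + 1) + (1 - σ) * y 0 j)) / (0.5 * h) + φ 0 j)
    -- the difference scheme (37) at the interior nodes `1 ≤ i ≤ N−1`:
    (hscheme : ∀ j < j₀, ∀ i, 1 ≤ i → i ≤ N - 1 →
      dCaputo (α i) τ (fun s => y i s) j =
        ((a (i + 1) j * ((σ * y (i + 1) (j + 1) + (1 - σ) * y (i + 1) j) -
            (σ * y i (j + 1) + (1 - σ) * y i j)) / h -
          a i j * ((σ * y i (j + 1) + (1 - σ) * y i j) -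
            (σ * y (i - 1) (j + 1) + (1 - σ) * y (i - 1) j)) / h) / h -
          d i j * (σ * y i (j + 1) + (1 - σ) * y i j)) + φ i j)
    -- the difference scheme (37) at the right boundary node `i = N`:
    (hschemeN : ∀ j < j₀,
      dCaputo (α N) τ (fun s => y N s) j =
        (-(a N j) * ((σ * y N (j + 1) + (1 - σ) * y N j) -
            (σ * y (N - 1) (j + 1) + (1 - σ) * y (N - 1) j)) / h -
          βt₂ j * (σ * y N (j + 1) + (1 - σ) * y N j)) / (0.5 * h) + φ N j)
    -- initial condition (38):
    (hic : ∀ i ≤ N, y i 0 = u₀ (i * h)) :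
    ∀ j < j₀,
      ((∑ i ∈ Finset.Icc 1 (N - 1), h * ((1 / Real.Gamma (2 - α i)) *
        ∑ j' ∈ Finset.range (j + 1),
          (((((j : ℕ) - j' + 1 : ℕ) : ℝ) * τ) ^ (1 - α i) -
            ((((j : ℕ) - j' : ℕ) : ℝ) * τ) ^ (1 - α i)) * (y i (j' + 1)) ^ 2)) +
        0.5 * h * ((1 / Real.Gamma (2 - α 0)) *
          ∑ j' ∈ Finset.range (j + 1),
            (((((j : ℕ) - j' + 1 : ℕ) : ℝ) * τ) ^ (1 - α 0) -
              ((((j : ℕ) - j' : ℕ) : ℝ) * τ) ^ (1 - α 0)) * (y 0 (j' + 1)) ^ 2) +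
        0.5 * h * ((1 / Real.Gamma (2 - α N)) *
          ∑ j' ∈ Finset.range (j + 1),
            (((((j : ℕ) - j' + 1 : ℕ) : ℝ) * τ) ^ (1 - α N) -
              ((((j : ℕ) - j' : ℕ) : ℝ) * τ) ^ (1 - α N)) * (y N (j' + 1)) ^ 2)) +
      min c₁ β₀ * ∑ j' ∈ Finset.range (j + 1),
        ((∑ i ∈ Finset.Icc 1 N, h *
            (((σ * y i (j' + 1) + (1 - σ) * y i j') -
              (σ * y (i - 1) (j' + 1) + (1 - σ) * y (i - 1) j')) / h) ^ 2) +
          (σ * y 0 (j' + 1) + (1 - σ) * y 0 j') ^ 2 +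
          (σ * y N (j' + 1) + (1 - σ) * y N j') ^ 2) * τ ≤
      max (1 + l) (l ^ 2) / min c₁ β₀ * ∑ j' ∈ Finset.range (j + 1),
        ((μt₁ j') ^ 2 + (μt₂ j') ^ 2 +
          ∑ i ∈ Finset.Icc 1 (N - 1), h * (φ i j') ^ 2) * τ +
      ((∑ i ∈ Finset.Icc 1 (N - 1), h *
          ((((j + 1 : ℕ) : ℝ) * τ) ^ (1 - α i) / Real.Gamma (2 - α i)) *
            (u₀ (i * h)) ^ 2) +
        0.5 * h * ((((j + 1 : ℕ) : ℝ) * τ) ^ (1 - α 0) / Real.Gamma (2 - α 0)) *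
          (u₀ 0) ^ 2 +
        0.5 * h * ((((j + 1 : ℕ) : ℝ) * τ) ^ (1 - α N) / Real.Gamma (2 - α N)) *
          (u₀ (N * h)) ^ 2) := by
  intro j hj
  have hNpos : (0:ℝ) < (N:ℝ) := by
    have : (0:ℕ) < N := by omega
    exact_mod_cast this
  have hh0 : 0 < h := by rw [hh]; exact div_pos hl hNpos
  have hτ0 : 0 < τ := by
    rw [hτ]; exact div_pos hT (by exact_mod_cast hj₀)
  have hlNh : (N:ℝ) * h = l := by
    rw [hh]; field_simp
  -- the σ-condition holds at every node
  have hσi : ∀ i ≤ N, 1 / (3 - (2:ℝ) ^ ((1:ℝ) - α i)) ≤ σ := by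
    intro i hi
    set m := (Finset.range (N + 1)).inf' (Finset.nonempty_range_iff.mpr (Nat.succ_ne_zero N)) α
      with hm
    obtain ⟨i₀, hi₀, hmeq⟩ :=
      Finset.exists_mem_eq_inf' (Finset.nonempty_range_iff.mpr (Nat.succ_ne_zero N)) α
    have hi₀N : i₀ ≤ N := by
      have := Finset.mem_range.mp hi₀; omega
    have hm0 : 0 < m := by rw [hm, hmeq]; exact (hα i₀ hi₀N).1
    have hmle : m ≤ α i := by
      rw [hm]; exact Finset.inf'_le α (Finset.mem_range.mpr (by omega))
    have hαi1 : α i < 1 := (hα i hi).2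
    have hq : (2:ℝ) ^ ((1:ℝ) - α i) ≤ (2:ℝ) ^ ((1:ℝ) - m) :=
      Real.rpow_le_rpow_of_exponent_le (by norm_num) (by linarith)
    have hqm : (2:ℝ) ^ ((1:ℝ) - m) < 2 := by
      nth_rewrite 2 [show (2:ℝ) = (2:ℝ)^(1:ℝ) by norm_num]
      exact Real.rpow_lt_rpow_of_exponent_lt (by norm_num) (by linarith)
    have hpos : 0 < 3 - (2:ℝ) ^ ((1:ℝ) - m) := by linarith
    have h12 : 1 / (3 - (2:ℝ)^((1:ℝ) - α i)) ≤ 1 / (3 - (2:ℝ)^((1:ℝ) - m)) := by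
      apply one_div_le_one_div_of_le hpos; linarith
    exact le_trans h12 hσ1
  -- per-level estimate
  have hlev : ∀ t, t < j₀ →
      (∑ i ∈ Icc 1 (N-1), h * dCaputo (α i) τ (fun s => (y i s)^2) t)
        + 0.5 * h * dCaputo (α 0) τ (fun s => (y 0 s)^2) t
        + 0.5 * h * dCaputo (α N) τ (fun s => (y N s)^2) t
        + min c₁ β₀ * ((∑ i ∈ Icc 1 N, h *
            (((σ * y i (t + 1) + (1 - σ) * y i t) -
              (σ * y (i - 1) (t + 1) + (1 - σ) * y (i - 1) t)) / h) ^ 2) +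
            (σ * y 0 (t + 1) + (1 - σ) * y 0 t) ^ 2 +
            (σ * y N (t + 1) + (1 - σ) * y N t) ^ 2) ≤
        max (1 + l) (l ^ 2) / min c₁ β₀ *
          ((μt₁ t) ^ 2 + (μt₂ t) ^ 2 + ∑ i ∈ Icc 1 (N-1), h * (φ i t) ^ 2) := by
    intro t ht
    exact perlevel l c₁ β₀ σ h τ N hN hl hc₁ hβ₀ hh0 hτ0 hlNh α hα hσi hσ2
      (fun i => a i t) (fun i => d i t) (fun i => φ i t) (βt₁ t) (βt₂ t) (μt₁ t) (μt₂ t)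
      (fun i h1 h2 => ha t ht i h1 h2) (fun i hi => hd t ht i hi) (hβ₁ t ht) (hβ₂ t ht)
      (hφ0 t ht) (hφN t ht) y t (hscheme0 t ht) (fun i h1 h2 => hscheme t ht i h1 h2)
      (hschemeN t ht)
  -- multiply by τ and sum over the time levels
  have h1 : ∀ t ∈ Finset.range (j+1),
      ((∑ i ∈ Icc 1 (N-1), h * dCaputo (α i) τ (fun s => (y i s)^2) t)
        + 0.5 * h * dCaputo (α 0) τ (fun s => (y 0 s)^2) t
        + 0.5 * h * dCaputo (α N) τ (fun s => (y N s)^2) t) * τ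
      + min c₁ β₀ * (((∑ i ∈ Icc 1 N, h *
            (((σ * y i (t + 1) + (1 - σ) * y i t) -
              (σ * y (i - 1) (t + 1) + (1 - σ) * y (i - 1) t)) / h) ^ 2) +
            (σ * y 0 (t + 1) + (1 - σ) * y 0 t) ^ 2 +
            (σ * y N (t + 1) + (1 - σ) * y N t) ^ 2) * τ) ≤
      max (1 + l) (l ^ 2) / min c₁ β₀ *
          (((μt₁ t) ^ 2 + (μt₂ t) ^ 2 + ∑ i ∈ Icc 1 (N-1), h * (φ i t) ^ 2) * τ) := by
    intro t ht'
    have ht : t < j₀ := by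
      have := Finset.mem_range.mp ht'; omega
    have h2 := mul_le_mul_of_nonneg_right (hlev t ht) (le_of_lt hτ0)
    calc ((∑ i ∈ Icc 1 (N-1), h * dCaputo (α i) τ (fun s => (y i s)^2) t)
        + 0.5 * h * dCaputo (α 0) τ (fun s => (y 0 s)^2) t
        + 0.5 * h * dCaputo (α N) τ (fun s => (y N s)^2) t) * τ
      + min c₁ β₀ * (((∑ i ∈ Icc 1 N, h *
            (((σ * y i (t + 1) + (1 - σ) * y i t) -
              (σ * y (i - 1) (t + 1) + (1 - σ) * y (i - 1) t)) / h) ^ 2) +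
            (σ * y 0 (t + 1) + (1 - σ) * y 0 t) ^ 2 +
            (σ * y N (t + 1) + (1 - σ) * y N t) ^ 2) * τ)
        = ((∑ i ∈ Icc 1 (N-1), h * dCaputo (α i) τ (fun s => (y i s)^2) t)
        + 0.5 * h * dCaputo (α 0) τ (fun s => (y 0 s)^2) t
        + 0.5 * h * dCaputo (α N) τ (fun s => (y N s)^2) t
        + min c₁ β₀ * ((∑ i ∈ Icc 1 N, h *
            (((σ * y i (t + 1) + (1 - σ) * y i t) -
              (σ * y (i - 1) (t + 1) + (1 - σ) * y (i - 1) t)) / h) ^ 2) +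
            (σ * y 0 (t + 1) + (1 - σ) * y 0 t) ^ 2 +
            (σ * y N (t + 1) + (1 - σ) * y N t) ^ 2)) * τ := by ring
      _ ≤ (max (1 + l) (l ^ 2) / min c₁ β₀ *
          ((μt₁ t) ^ 2 + (μt₂ t) ^ 2 + ∑ i ∈ Icc 1 (N-1), h * (φ i t) ^ 2)) * τ := h2
      _ = max (1 + l) (l ^ 2) / min c₁ β₀ *
          (((μt₁ t) ^ 2 + (μt₂ t) ^ 2 + ∑ i ∈ Icc 1 (N-1), h * (φ i t) ^ 2) * τ) := by ring
  have h2 := Finset.sum_le_sum h1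
  rw [Finset.sum_add_distrib, ← Finset.mul_sum, ← Finset.mul_sum] at h2
  -- time-summation identity for the dCaputo part
  have hts : ∀ i ≤ N, ∑ t ∈ Finset.range (j+1), τ * dCaputo (α i) τ (fun s => (y i s)^2) t
      = (1/Real.Gamma (2 - α i)) * (∑ j' ∈ Finset.range (j+1),
          (((((j:ℕ) - j' + 1 : ℕ):ℝ)*τ)^(1 - α i) - ((((j:ℕ) - j' : ℕ):ℝ)*τ)^(1 - α i))
            * (y i (j'+1))^2)
        - ((((j+1:ℕ):ℝ)*τ)^(1 - α i))/Real.Gamma (2 - α i) * (y i 0)^2 := by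
    intro i hi
    exact time_sum (α i) τ (hα i hi).1 (hα i hi).2 hτ0 (fun s => (y i s)^2) j
  have hEn : ∑ t ∈ Finset.range (j+1),
      ((∑ i ∈ Icc 1 (N-1), h * dCaputo (α i) τ (fun s => (y i s)^2) t)
        + 0.5 * h * dCaputo (α 0) τ (fun s => (y 0 s)^2) t
        + 0.5 * h * dCaputo (α N) τ (fun s => (y N s)^2) t) * τ =
      ((∑ i ∈ Finset.Icc 1 (N - 1), h * ((1 / Real.Gamma (2 - α i)) *
        ∑ j' ∈ Finset.range (j + 1),
          (((((j : ℕ) - j' + 1 : ℕ) : ℝ) * τ) ^ (1 - α i) -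
            ((((j : ℕ) - j' : ℕ) : ℝ) * τ) ^ (1 - α i)) * (y i (j' + 1)) ^ 2)) +
        0.5 * h * ((1 / Real.Gamma (2 - α 0)) *
          ∑ j' ∈ Finset.range (j + 1),
            (((((j : ℕ) - j' + 1 : ℕ) : ℝ) * τ) ^ (1 - α 0) -
              ((((j : ℕ) - j' : ℕ) : ℝ) * τ) ^ (1 - α 0)) * (y 0 (j' + 1)) ^ 2) +
        0.5 * h * ((1 / Real.Gamma (2 - α N)) *
          ∑ j' ∈ Finset.range (j + 1),
            (((((j : ℕ) - j' + 1 : ℕ) : ℝ) * τ) ^ (1 - α N) -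
              ((((j : ℕ) - j' : ℕ) : ℝ) * τ) ^ (1 - α N)) * (y N (j' + 1)) ^ 2)) -
      ((∑ i ∈ Finset.Icc 1 (N - 1), h *
          ((((j + 1 : ℕ) : ℝ) * τ) ^ (1 - α i) / Real.Gamma (2 - α i)) *
            (u₀ (i * h)) ^ 2) +
        0.5 * h * ((((j + 1 : ℕ) : ℝ) * τ) ^ (1 - α 0) / Real.Gamma (2 - α 0)) *
          (u₀ 0) ^ 2 +
        0.5 * h * ((((j + 1 : ℕ) : ℝ) * τ) ^ (1 - α N) / Real.Gamma (2 - α N)) *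
          (u₀ (N * h)) ^ 2) := by
    have ea : ∀ t ∈ Finset.range (j+1),
        ((∑ i ∈ Icc 1 (N-1), h * dCaputo (α i) τ (fun s => (y i s)^2) t)
          + 0.5 * h * dCaputo (α 0) τ (fun s => (y 0 s)^2) t
          + 0.5 * h * dCaputo (α N) τ (fun s => (y N s)^2) t) * τ =
        (∑ i ∈ Icc 1 (N-1), h * (τ * dCaputo (α i) τ (fun s => (y i s)^2) t))
          + 0.5 * h * (τ * dCaputo (α 0) τ (fun s => (y 0 s)^2) t)
          + 0.5 * h * (τ * dCaputo (α N) τ (fun s => (y N s)^2) t) := by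
      intro t _
      rw [add_mul, add_mul, Finset.sum_mul]
      congr 1
      · congr 1
        · apply Finset.sum_congr rfl; intro i _; ring
        · ring
      · ring
    rw [Finset.sum_congr rfl ea, Finset.sum_add_distrib, Finset.sum_add_distrib,
      Finset.sum_comm]
    have eb : ∀ i ∈ Icc 1 (N-1),
        ∑ t ∈ Finset.range (j+1), h * (τ * dCaputo (α i) τ (fun s => (y i s)^2) t) =
        h * ((1 / Real.Gamma (2 - α i)) *
          ∑ j' ∈ Finset.range (j + 1),
            (((((j : ℕ) - j' + 1 : ℕ) : ℝ) * τ) ^ (1 - α i) -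
              ((((j : ℕ) - j' : ℕ) : ℝ) * τ) ^ (1 - α i)) * (y i (j' + 1)) ^ 2)
          - h * ((((j + 1 : ℕ) : ℝ) * τ) ^ (1 - α i) / Real.Gamma (2 - α i)) *
            (u₀ (i * h)) ^ 2 := by
      intro i hi
      obtain ⟨hi1, hi2⟩ := Finset.mem_Icc.mp hi
      rw [← Finset.mul_sum, hts i (by omega), hic i (by omega)]
      ring
    rw [Finset.sum_congr rfl eb, Finset.sum_sub_distrib]
    have ec : ∑ t ∈ Finset.range (j+1), τ * dCaputo (α 0) τ (fun s => (y 0 s)^2) t =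
        (1/Real.Gamma (2 - α 0)) * (∑ j' ∈ Finset.range (j+1),
          (((((j:ℕ) - j' + 1 : ℕ):ℝ)*τ)^(1 - α 0) - ((((j:ℕ) - j' : ℕ):ℝ)*τ)^(1 - α 0))
            * (y 0 (j'+1))^2)
        - ((((j+1:ℕ):ℝ)*τ)^(1 - α 0))/Real.Gamma (2 - α 0) * (u₀ 0)^2 := by
      rw [hts 0 (by omega)]
      have : y 0 0 = u₀ 0 := by
        have := hic 0 (by omega)
        simpa using this
      rw [this]
    have ed : ∑ t ∈ Finset.range (j+1), τ * dCaputo (α N) τ (fun s => (y N s)^2) t =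
        (1/Real.Gamma (2 - α N)) * (∑ j' ∈ Finset.range (j+1),
          (((((j:ℕ) - j' + 1 : ℕ):ℝ)*τ)^(1 - α N) - ((((j:ℕ) - j' : ℕ):ℝ)*τ)^(1 - α N))
            * (y N (j'+1))^2)
        - ((((j+1:ℕ):ℝ)*τ)^(1 - α N))/Real.Gamma (2 - α N) * (u₀ ((N:ℝ) * h))^2 := by
      rw [hts N (le_refl N), hic N (le_refl N)]
    have ec2 : ∑ t ∈ Finset.range (j+1), 0.5 * h * (τ * dCaputo (α 0) τ (fun s => (y 0 s)^2) t)
        = 0.5 * h * ∑ t ∈ Finset.range (j+1), τ * dCaputo (α 0) τ (fun s => (y 0 s)^2) t := by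
      rw [Finset.mul_sum]
    have ed2 : ∑ t ∈ Finset.range (j+1), 0.5 * h * (τ * dCaputo (α N) τ (fun s => (y N s)^2) t)
        = 0.5 * h * ∑ t ∈ Finset.range (j+1), τ * dCaputo (α N) τ (fun s => (y N s)^2) t := by
      rw [Finset.mul_sum]
    rw [ec2, ed2, ec, ed]
    ring
  linarith [h2, hEn]
end

section
/- Let l, T > 0, N, j₀ ∈ ℕ with N ≥ 2, h = l/N, τ = T/j₀, grid points x_i = ih, t_j = jτ. Let α : {0,…,N} → (0,1) with α_i = α(x_i), c₁ > 0, and for each time level j let a_i^{j+1/2} ≥ c₁ (1 ≤ i ≤ N), d_i^{j+1/2} ≥ 0 (1 ≤ i ≤ N−1), and φ_i^{j+1/2} be given. Suppose σ ≥ 1/(3 − 2^{1−min_i α_i}) and σ ≤ 1, and y_i^j solves Δ_{0t_j}^{α_i} y_i = (Λ(σ y^{j+1} + (1−σ)y^j))_i + φ_i^{j+1/2} for 1 ≤ i ≤ N−1, with y_0^j = y_N^j = 0. Then for every 0 ≤ j ≤ j₀−1: (1, Δ_{0t_j}^{α_i}(y²)) + c₁ ‖(σ y^{j+1} + (1−σ)y^j)_x̄‖₀'²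 ≤ (l²/(2c₁)) ‖φ^{j+1/2}‖₀², where (1, Δ_{0t_j}^{α_i}(y²)) = Σ_{i=1}^{N−1} h · Δ_{0t_j}^{α_i}((y_i)²) and Δ_{0t_j}^{α_i}((y_i)²) denotes the discrete Caputo operator applied to the sequence j ↦ (y_i^j)². -/
open Finset
-- Abel summation
private lemma abel_sum (B G : ℕ → ℝ) (n : ℕ) :
    ∑ s ∈ range (n+1), B s * (G s - G (s+1)) =
      B 0 * G 0 - B n * G (n+1) + ∑ s ∈ range n, (B (s+1) - B s) * G (s+1) := by
  induction n with
  | zero => simp; ring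
  | succ n ih =>
      rw [Finset.sum_range_succ, ih, Finset.sum_range_succ (f := fun s => (B (s+1) - B s) * G (s+1))]
      ring

private lemma concave_step {β τ : ℝ} (hβ0 : 0 < β) (hβ1 : β < 1) (hτ : 0 < τ) (k : ℕ) :
    (((k:ℝ)+2)*τ)^β + ((k:ℝ)*τ)^β ≤ 2*(((k:ℝ)+1)*τ)^β := by
  have hc := (Real.strictConcaveOn_rpow hβ0 hβ1).concaveOn
  have h2 := hc.2 (Set.mem_Ici.mpr (by positivity : (0:ℝ) ≤ (k:ℝ)*τ))
    (Set.mem_Ici.mpr (by positivity : (0:ℝ) ≤ ((k:ℝ)+2)*τ))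
    (by norm_num : (0:ℝ) ≤ 1/2) (by norm_num : (0:ℝ) ≤ 1/2) (by norm_num)
  have harg : (1/2:ℝ) • ((k:ℝ)*τ) + (1/2:ℝ) • (((k:ℝ)+2)*τ) = ((k:ℝ)+1)*τ := by
    simp [smul_eq_mul]; ring
  rw [harg] at h2
  simp only [smul_eq_mul] at h2
  linarith

private lemma sum_by_parts_s18 (A v : ℕ → ℝ) (hv0 : v 0 = 0) (M : ℕ) :
    ∑ i ∈ Finset.Icc 1 M, v i * (A (i+1) * (v (i+1) - v i) - A i * (v i - v (i-1)))
      = - ∑ i ∈ Finset.Icc 1 (M+1), A i * (v i - v (i-1))^2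
        + v (M+1) * (A (M+1) * (v (M+1) - v M)) := by
  induction M with
  | zero => simp [hv0]; ring
  | succ M ih =>
      rw [Finset.sum_Icc_succ_top (by omega : 1 ≤ M+1), ih,
        Finset.sum_Icc_succ_top (by omega : 1 ≤ M+1+1)]
      simp only [Nat.add_sub_cancel]
      ring

private lemma telescope (v : ℕ → ℝ) (hv0 : v 0 = 0) : ∀ i, v i = ∑ k ∈ Finset.Icc 1 i, (v k - v (k-1)) := by
  intro i
  induction i with
  | zero => simp [hv0]
  | succ i ih =>
      rw [Finset.sum_Icc_succ_top (by omega : 1 ≤ i+1), ← ih]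
      simp only [Nat.add_sub_cancel]
      ring

private lemma gauss (m : ℕ) : ∑ i ∈ Finset.Icc 1 m, (i:ℝ) = m*(m+1)/2 := by
  induction m with
  | zero => simp
  | succ m ih => rw [Finset.sum_Icc_succ_top (by omega : 1 ≤ m+1), ih]; push_cast; ring

private lemma young_aux {c l : ℝ} (hc : 0 < c) (hl : 0 < l) (v f : ℝ) :
    2*(v*f) ≤ 2*c/l^2 * v^2 + l^2/(2*c) * f^2 := by
  rw [div_mul_eq_mul_div, div_mul_eq_mul_div,
    div_add_div _ _ (by positivity) (by positivity), le_div_iff₀ (by positivity)]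
  nlinarith [sq_nonneg (2*c*v - l^2*f)]

private lemma alikhanov_sum (β τ σ : ℝ) (hβ0 : 0 < β) (hβ1 : β < 1) (hτ : 0 < τ)
    (hσ2 : σ ≤ 1) (hσ1 : ((2:ℝ)^β - 1) * σ^2 ≤ 2*σ - 1)
    (y : ℕ → ℝ) (j : ℕ) :
    ∑ s ∈ Finset.range (j+1),
        ((((j - s + 1 : ℕ):ℝ) * τ)^β - (((j - s : ℕ):ℝ) * τ)^β) * ((y (s+1))^2 - (y s)^2)
      ≤ 2 * (σ * y (j+1) + (1-σ) * y j) *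
        ∑ s ∈ Finset.range (j+1),
          ((((j - s + 1 : ℕ):ℝ) * τ)^β - (((j - s : ℕ):ℝ) * τ)^β) * (y (s+1) - y s) := by
  have h2β : (1:ℝ) ≤ 2^β := by
    calc (1:ℝ) = 2^(0:ℝ) := (Real.rpow_zero 2).symm
    _ ≤ 2^β := Real.rpow_le_rpow_of_exponent_le one_le_two hβ0.le
  have h2σ : 0 ≤ 2*σ - 1 := by nlinarith [sq_nonneg σ]
  obtain ⟨B, hB⟩ : ∃ B : ℕ → ℝ,
      B = fun s => (((j - s + 1 : ℕ):ℝ) * τ)^β - (((j - s : ℕ):ℝ) * τ)^β := ⟨_, rfl⟩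
  have hBs : ∀ s, (((j - s + 1 : ℕ):ℝ) * τ)^β - (((j - s : ℕ):ℝ) * τ)^β = B s := by
    intro s; rw [hB]
  simp only [hBs]
  have hBnn : ∀ s, 0 ≤ B s := by
    intro s; rw [hB]
    have : ((j - s : ℕ):ℝ) * τ ≤ ((j - s + 1 : ℕ):ℝ) * τ := by
      have : ((j - s : ℕ):ℝ) ≤ ((j - s + 1 : ℕ):ℝ) := by exact_mod_cast Nat.le_succ _
      exact mul_le_mul_of_nonneg_right this hτ.le
    exact sub_nonneg.mpr (Real.rpow_le_rpow (by positivity) this hβ0.le)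
  have hmono : ∀ s, s + 1 ≤ j → B s ≤ B (s+1) := by
    intro s hs
    obtain ⟨k, hk⟩ : ∃ k, j - s = k + 1 := ⟨j - s - 1, by omega⟩
    have e1 : j - (s+1) = k := by omega
    have e2 : j - s + 1 = k + 2 := by omega
    have e3 : j - (s+1) + 1 = k + 1 := by omega
    rw [hB]
    simp only [hk, e1, e2, e3]
    push_cast
    rw [show ((k:ℝ)+1+1) = ((k:ℝ)+2) from by ring]
    have := concave_step hβ0 hβ1 hτ k
    linarith
  have hBj : B j = τ^β := by
    rw [hB]; simp [Nat.sub_self, Real.zero_rpow hβ0.ne']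
  -- key identity
  rw [← sub_nonneg, Finset.mul_sum, ← Finset.sum_sub_distrib]
  have key : ∀ s, 2 * (σ * y (j+1) + (1-σ) * y j) * (B s * (y (s+1) - y s))
      - B s * ((y (s+1))^2 - (y s)^2)
      = B s * ((y j - y s + σ*(y (j+1) - y j))^2 - (y j - y (s+1) + σ*(y (j+1) - y j))^2) := by
    intro s; ring
  rw [Finset.sum_congr rfl (fun s _ => key s)]
  have habel := abel_sum B (fun s => (y j - y s + σ*(y (j+1) - y j))^2) j
  try simp only [] at habel
  rw [habel]
  rcases j with _ | m
  · -- j = 0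
    simp only [Finset.range_zero, Finset.sum_empty, add_zero]
    have hB0 : B 0 = τ^β := hBj
    rw [hB0]
    have ht : (0:ℝ) ≤ τ^β := (Real.rpow_pos_of_pos hτ β).le
    nlinarith [mul_nonneg (mul_nonneg ht h2σ) (sq_nonneg (y 1 - y 0))]
  · -- j = m+1
    have hBm : B m = 2^β * τ^β - τ^β := by
      rw [hB]
      have e1 : m + 1 - m = 1 := by omega
      have e2 : m + 1 - m + 1 = 2 := by omega
      simp only [e1, e2]
      push_cast
      rw [show (2:ℝ)*τ = 2*τ from rfl, Real.mul_rpow (by norm_num) hτ.le, one_mul]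
    have hsingle : (B (m+1) - B m) * (y (m+1) - y (m+1) + σ*(y (m+2) - y (m+1)))^2
        ≤ ∑ s ∈ Finset.range (m+1),
            (B (s+1) - B s) * (y (m+1) - y (s+1) + σ*(y (m+2) - y (m+1)))^2 := by
      have := Finset.single_le_sum
        (f := fun s => (B (s+1) - B s) * (y (m+1) - y (s+1) + σ*(y (m+2) - y (m+1)))^2)
        (fun s hs => mul_nonneg (sub_nonneg.mpr (hmono s (by
          simp only [Finset.mem_range] at hs; omega))) (sq_nonneg _))
        (Finset.self_mem_range_succ m)
      simpa using this
    have ht : (0:ℝ) ≤ τ^β := (Real.rpow_pos_of_pos hτ β).le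
    have hgap : 0 ≤ 2*σ - 1 - ((2:ℝ)^β - 1)*σ^2 := by linarith
    have hkey : 0 ≤ τ^β * ((2*σ - 1 - ((2:ℝ)^β - 1)*σ^2) * (y (m+2) - y (m+1))^2) :=
      mul_nonneg ht (mul_nonneg hgap (sq_nonneg _))
    have hB0G0 : 0 ≤ B 0 * (y (m+1) - y 0 + σ*(y (m+2) - y (m+1)))^2 :=
      mul_nonneg (hBnn 0) (sq_nonneg _)
    have hj' : B (m+1) = τ^β := hBj
    nlinarith [hsingle, hkey, hB0G0, hj', hBm]

private lemma dCaputo_eq (α τ : ℝ) (y : ℕ → ℝ) (j : ℕ) :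
    dCaputo α τ y j = (∑ s ∈ Finset.range (j+1),
      ((((j - s + 1 : ℕ):ℝ) * τ)^(1-α) - (((j - s : ℕ):ℝ) * τ)^(1-α)) * (y (s+1) - y s))
        / (Real.Gamma (2-α) * τ) := by
  unfold dCaputo
  rw [← Finset.sum_div]
  ring

private lemma alikhanov_dCaputo (αi τ σ : ℝ) (hα0 : 0 < αi) (hα1 : αi < 1) (hτ : 0 < τ)
    (hσ2 : σ ≤ 1) (hσ1 : ((2:ℝ)^((1:ℝ)-αi) - 1) * σ^2 ≤ 2*σ - 1)
    (y : ℕ → ℝ) (j : ℕ) :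
    dCaputo αi τ (fun s => (y s)^2) j ≤
      2 * (σ * y (j+1) + (1-σ) * y j) * dCaputo αi τ y j := by
  have hΓ : 0 < Real.Gamma (2 - αi) := Real.Gamma_pos_of_pos (by linarith)
  rw [dCaputo_eq, dCaputo_eq, ← mul_div_assoc]
  have h1 : (0:ℝ) < Real.Gamma (2 - αi) * τ := by positivity
  gcongr
  exact alikhanov_sum (1-αi) τ σ (by linarith) (by linarith) hτ hσ2 hσ1 y j

set_option maxHeartbeats 1000000 in
/-- The per-time-level energy inequality (30) for the weighted difference
scheme (19)–(20) for the Dirichlet problem, valid for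
`σ ≥ 1/(3 − 2^{1−min_i α_i})`:
`(1, Δ_{0t_j}^{α_i}(y²)) + c₁‖y_x̄^{(σ)}‖₀'² ≤ (l²/(2c₁))‖φ‖₀²`. -/
theorem dirichlet_scheme_level_estimate
    (l T c₁ σ : ℝ) (N j₀ : ℕ) (hN : 2 ≤ N) (hj₀ : 0 < j₀)
    (hl : 0 < l) (hT : 0 < T) (hc₁ : 0 < c₁)
    (h τ : ℝ) (hh : h = l / N) (hτ : τ = T / j₀)
    (α : ℕ → ℝ) (hα : ∀ i ≤ N, 0 < α i ∧ α i < 1)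
    (a d φ : ℕ → ℕ → ℝ)
    (ha : ∀ j < j₀, ∀ i, 1 ≤ i → i ≤ N → c₁ ≤ a i j)
    (hd : ∀ j < j₀, ∀ i, 1 ≤ i → i ≤ N - 1 → 0 ≤ d i j)
    (hσ1 : 1 / (3 - (2:ℝ) ^ ((1:ℝ) -
      (Finset.range (N + 1)).inf' (Finset.nonempty_range_iff.mpr (Nat.succ_ne_zero N)) α)) ≤ σ)
    (hσ2 : σ ≤ 1)
    (y : ℕ → ℕ → ℝ)
    -- the difference scheme (19):
    (hscheme : ∀ j < j₀, ∀ i, 1 ≤ i → i ≤ N - 1 →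
      dCaputo (α i) τ (fun s => y i s) j =
        ((a (i + 1) j * ((σ * y (i + 1) (j + 1) + (1 - σ) * y (i + 1) j) -
            (σ * y i (j + 1) + (1 - σ) * y i j)) / h -
          a i j * ((σ * y i (j + 1) + (1 - σ) * y i j) -
            (σ * y (i - 1) (j + 1) + (1 - σ) * y (i - 1) j)) / h) / h -
          d i j * (σ * y i (j + 1) + (1 - σ) * y i j)) + φ i j)
    -- boundary conditions (20):
    (hbc : ∀ j ≤ j₀, y 0 j = 0 ∧ y N j = 0) :
    ∀ j < j₀,
      (∑ i ∈ Finset.Icc 1 (N - 1), h *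
        dCaputo (α i) τ (fun s => (y i s) ^ 2) j) +
      c₁ * (∑ i ∈ Finset.Icc 1 N, h *
        (((σ * y i (j + 1) + (1 - σ) * y i j) -
          (σ * y (i - 1) (j + 1) + (1 - σ) * y (i - 1) j)) / h) ^ 2) ≤
      l ^ 2 / (2 * c₁) * ∑ i ∈ Finset.Icc 1 (N - 1), h * (φ i j) ^ 2 := by
  intro j hj
  have hτ0 : 0 < τ := by rw [hτ]; exact div_pos hT (by exact_mod_cast hj₀)
  have h0 : 0 < h := by
    rw [hh]; exact div_pos hl (by exact_mod_cast (by omega : 0 < N))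
  have hhne : h ≠ 0 := h0.ne'
  have hNl : h * N = l := by
    rw [hh]; field_simp
  -- the minimum order
  obtain ⟨i0, hi0mem, hi0⟩ := Finset.exists_mem_eq_inf'
    (Finset.nonempty_range_iff.mpr (Nat.succ_ne_zero N)) α
  rw [hi0] at hσ1
  have hi0N : i0 ≤ N := by simpa [Nat.lt_succ_iff] using hi0mem
  have hα0 := hα i0 hi0N
  have h2m : (2:ℝ)^((1:ℝ) - α i0) < 2 := by
    calc (2:ℝ)^((1:ℝ) - α i0) < 2^(1:ℝ) :=
      Real.rpow_lt_rpow_of_exponent_lt one_lt_two (by linarith [hα0.1])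
    _ = 2 := Real.rpow_one 2
  have hden : 0 < 3 - (2:ℝ)^((1:ℝ) - α i0) := by linarith
  have hσ0 : 0 < σ := lt_of_lt_of_le (one_div_pos.mpr hden) hσ1
  have hσd : 1 ≤ σ * (3 - (2:ℝ)^((1:ℝ) - α i0)) := (div_le_iff₀ hden).mp hσ1
  have hcond : ∀ i ≤ N, ((2:ℝ)^((1:ℝ) - α i) - 1) * σ^2 ≤ 2*σ - 1 := by
    intro i hi
    have hmem : i ∈ Finset.range (N+1) := by simp [Nat.lt_succ_iff]; omega
    have hmle : α i0 ≤ α i := by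
      have h1 : (Finset.range (N+1)).inf'
          (Finset.nonempty_range_iff.mpr (Nat.succ_ne_zero N)) α ≤ α i := by
        exact Finset.inf'_le (f := α) hmem
      rwa [hi0] at h1
    have h2i : (2:ℝ)^((1:ℝ) - α i) ≤ 2^((1:ℝ) - α i0) :=
      Real.rpow_le_rpow_of_exponent_le one_le_two (by linarith)
    have h1i : (1:ℝ) ≤ 2^((1:ℝ) - α i) := by
      calc (1:ℝ) = 2^(0:ℝ) := (Real.rpow_zero 2).symm
      _ ≤ _ := Real.rpow_le_rpow_of_exponent_le one_le_two (by linarith [(hα i hi).2])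
    nlinarith [mul_le_mul_of_nonneg_left h2i hσ0.le,
      mul_nonneg (by linarith : (0:ℝ) ≤ (2:ℝ)^((1:ℝ) - α i) - 1)
        (by nlinarith : (0:ℝ) ≤ σ - σ^2)]
  -- the weighted level function
  obtain ⟨v, hvdef⟩ : ∃ v : ℕ → ℝ, v = fun i => σ * y i (j + 1) + (1 - σ) * y i j := ⟨_, rfl⟩
  have hrw : ∀ i : ℕ, σ * y i (j + 1) + (1 - σ) * y i j = v i := fun i => by rw [hvdef]
  simp only [hrw]
  have hv0 : v 0 = 0 := by
    rw [hvdef]; simp [(hbc (j+1) hj).1, (hbc j hj.le).1]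
  have hvN : v N = 0 := by
    rw [hvdef]; simp [(hbc (j+1) hj).2, (hbc j hj.le).2]
  -- Step A : Alikhanov inequality termwise
  have hA : (∑ i ∈ Finset.Icc 1 (N - 1), h * dCaputo (α i) τ (fun s => (y i s) ^ 2) j)
      ≤ ∑ i ∈ Finset.Icc 1 (N - 1), h * (2 * v i * dCaputo (α i) τ (fun s => y i s) j) := by
    apply Finset.sum_le_sum
    intro i hi
    obtain ⟨h1i, h2i⟩ := Finset.mem_Icc.mp hi
    have hiN : i ≤ N := by omega
    have hal := alikhanov_dCaputo (α i) τ σ (hα i hiN).1 (hα i hiN).2 hτ0 hσ2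
      (hcond i hiN) (fun s => y i s) j
    simp only [hrw] at hal
    exact mul_le_mul_of_nonneg_left hal h0.le
  -- Step B : rewrite via the scheme
  have hB : (∑ i ∈ Finset.Icc 1 (N - 1), h * (2 * v i * dCaputo (α i) τ (fun s => y i s) j))
      = 2/h * (∑ i ∈ Finset.Icc 1 (N - 1),
          v i * (a (i+1) j * (v (i+1) - v i) - a i j * (v i - v (i-1))))
        - 2*h*(∑ i ∈ Finset.Icc 1 (N - 1), d i j * (v i)^2)
        + 2*h*(∑ i ∈ Finset.Icc 1 (N - 1), v i * φ i j) := by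
    rw [Finset.mul_sum, Finset.mul_sum, Finset.mul_sum, ← Finset.sum_sub_distrib,
      ← Finset.sum_add_distrib]
    apply Finset.sum_congr rfl
    intro i hi
    obtain ⟨h1i, h2i⟩ := Finset.mem_Icc.mp hi
    rw [hscheme j hj i h1i h2i]
    simp only [hrw]
    field_simp
  -- summation by parts
  have hsbp : (∑ i ∈ Finset.Icc 1 (N - 1),
      v i * (a (i+1) j * (v (i+1) - v i) - a i j * (v i - v (i-1))))
      = - ∑ i ∈ Finset.Icc 1 N, a i j * (v i - v (i-1))^2 := by
    have hs := sum_by_parts_s18 (fun i => a i j) v hv0 (N-1)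
    rw [show N - 1 + 1 = N from by omega] at hs
    rw [hs, hvN]; ring
  have hW2nn : (0:ℝ) ≤ ∑ i ∈ Finset.Icc 1 N, (v i - v (i-1))^2 :=
    Finset.sum_nonneg fun i _ => sq_nonneg _
  have hAw : c₁ * (∑ i ∈ Finset.Icc 1 N, (v i - v (i-1))^2)
      ≤ ∑ i ∈ Finset.Icc 1 N, a i j * (v i - v (i-1))^2 := by
    rw [Finset.mul_sum]
    apply Finset.sum_le_sum
    intro i hi
    obtain ⟨h1i, h2i⟩ := Finset.mem_Icc.mp hi
    exact mul_le_mul_of_nonneg_right (ha j hj i h1i h2i) (sq_nonneg _)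
  -- rewrite goal's gradient norm
  have hWg : (∑ i ∈ Finset.Icc 1 N, h * ((v i - v (i-1))/h)^2)
      = (∑ i ∈ Finset.Icc 1 N, (v i - v (i-1))^2) * (1/h) := by
    rw [Finset.sum_mul]
    apply Finset.sum_congr rfl
    intro i _
    field_simp
  rw [hWg]
  -- Friedrichs inequality
  have hVle : ∀ i ∈ Finset.Icc 1 (N-1), (v i)^2 ≤ (i:ℝ) *
      ∑ k ∈ Finset.Icc 1 N, (v k - v (k-1))^2 := by
    intro i hi
    obtain ⟨h1i, h2i⟩ := Finset.mem_Icc.mp hi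
    have hcs : (v i)^2 ≤ (i:ℝ) * ∑ k ∈ Finset.Icc 1 i, (v k - v (k-1))^2 := by
      have := sq_sum_le_card_mul_sum_sq (s := Finset.Icc 1 i)
        (f := fun k => v k - v (k-1))
      rw [← telescope v hv0 i] at this
      simpa using this
    refine hcs.trans ?_
    apply mul_le_mul_of_nonneg_left _ (by positivity)
    apply Finset.sum_le_sum_of_subset_of_nonneg
      (Finset.Icc_subset_Icc_right (by omega))
    intro k _ _; exact sq_nonneg _
  have hFried : (∑ i ∈ Finset.Icc 1 (N - 1), h * (v i)^2)
      ≤ l^2/2 * ((∑ i ∈ Finset.Icc 1 N, (v i - v (i-1))^2) * (1/h)) := by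
    have step1 : (∑ i ∈ Finset.Icc 1 (N - 1), h * (v i)^2)
        ≤ ∑ i ∈ Finset.Icc 1 (N - 1), h * ((i:ℝ) * ∑ k ∈ Finset.Icc 1 N, (v k - v (k-1))^2) :=
      Finset.sum_le_sum fun i hi => mul_le_mul_of_nonneg_left (hVle i hi) h0.le
    have step2 : (∑ i ∈ Finset.Icc 1 (N - 1),
          h * ((i:ℝ) * ∑ k ∈ Finset.Icc 1 N, (v k - v (k-1))^2))
        = (∑ i ∈ Finset.Icc 1 (N-1), (i:ℝ)) *
            (h * ∑ k ∈ Finset.Icc 1 N, (v k - v (k-1))^2) := by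
      rw [Finset.sum_mul]
      apply Finset.sum_congr rfl
      intro i _; ring
    have hcast : ((N-1:ℕ):ℝ) = (N:ℝ) - 1 := by
      have h1 : (1:ℕ) ≤ N := by omega
      rw [Nat.cast_sub h1, Nat.cast_one]
    have step3 : (∑ i ∈ Finset.Icc 1 (N-1), (i:ℝ)) = ((N:ℝ) - 1) * (N:ℝ) / 2 := by
      rw [gauss (N-1), hcast]; ring
    have hl2 : l^2 = h^2 * (N:ℝ)^2 := by rw [← hNl]; ring
    have hNR : (2:ℝ) ≤ (N:ℝ) := by exact_mod_cast hN
    refine (step1.trans_eq step2).trans ?_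
    rw [step3]
    have hrhs : l^2/2 * ((∑ i ∈ Finset.Icc 1 N, (v i - v (i-1))^2) * (1/h))
        = ((N:ℝ)^2/2) * (h * ∑ i ∈ Finset.Icc 1 N, (v i - v (i-1))^2) := by
      rw [hl2]; field_simp
    rw [hrhs]
    have hhS : (0:ℝ) ≤ (N:ℝ) * (h * ∑ i ∈ Finset.Icc 1 N, (v i - v (i-1))^2) :=
      mul_nonneg (by positivity) (mul_nonneg h0.le hW2nn)
    nlinarith [hhS]
  -- Young inequality
  have hYoung : 2*h*(∑ i ∈ Finset.Icc 1 (N - 1), v i * φ i j)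
      ≤ 2*c₁/l^2 * (∑ i ∈ Finset.Icc 1 (N - 1), h * (v i)^2)
        + l ^ 2 / (2 * c₁) * ∑ i ∈ Finset.Icc 1 (N - 1), h * (φ i j) ^ 2 := by
    rw [Finset.mul_sum, Finset.mul_sum, Finset.mul_sum, ← Finset.sum_add_distrib]
    apply Finset.sum_le_sum
    intro i hi
    calc 2*h*(v i * φ i j) = h * (2*(v i * φ i j)) := by ring
      _ ≤ h * (2*c₁/l^2 * (v i)^2 + l^2/(2*c₁) * (φ i j)^2) :=
          mul_le_mul_of_nonneg_left (young_aux hc₁ hl (v i) (φ i j)) h0.le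
      _ = 2*c₁/l^2 * (h*(v i)^2) + l ^ 2/(2*c₁) * (h*(φ i j)^2) := by ring
  have hd0 : 0 ≤ 2*h*(∑ i ∈ Finset.Icc 1 (N - 1), d i j * (v i)^2) := by
    apply mul_nonneg (by positivity)
    apply Finset.sum_nonneg
    intro i hi
    obtain ⟨h1i, h2i⟩ := Finset.mem_Icc.mp hi
    exact mul_nonneg (hd j hj i h1i h2i) (sq_nonneg _)
  have hEps1 : 2*c₁/l^2 * (∑ i ∈ Finset.Icc 1 (N - 1), h * (v i)^2)
      ≤ 2*c₁/l^2 * (l^2/2 * ((∑ i ∈ Finset.Icc 1 N, (v i - v (i-1))^2) * (1/h))) :=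
    mul_le_mul_of_nonneg_left hFried (by positivity)
  have hEps2 : 2*c₁/l^2 * (l^2/2 * ((∑ i ∈ Finset.Icc 1 N, (v i - v (i-1))^2) * (1/h)))
      = c₁ * ((∑ i ∈ Finset.Icc 1 N, (v i - v (i-1))^2) * (1/h)) := by
    field_simp
  have hSBP2 : 2/h * (∑ i ∈ Finset.Icc 1 (N - 1),
      v i * (a (i+1) j * (v (i+1) - v i) - a i j * (v i - v (i-1))))
      ≤ 2/h * (-(c₁ * ∑ i ∈ Finset.Icc 1 N, (v i - v (i-1))^2)) := by
    rw [hsbp]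
    apply mul_le_mul_of_nonneg_left _ (by positivity)
    linarith [hAw]
  have hSBP3 : 2/h * (-(c₁ * ∑ i ∈ Finset.Icc 1 N, (v i - v (i-1))^2))
      = -(2*(c₁ * ((∑ i ∈ Finset.Icc 1 N, (v i - v (i-1))^2) * (1/h)))) := by
    ring
  linarith [hA, hB, hSBP2, hSBP3, hd0, hYoung, hEps1, hEps2]
end
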